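/- Let m ≥ 4 be an integer, let B_m(3) be the (m−1)×(m−1) real matrix defined below, and let Δ(m) = ∑_{k=0}^{m} [binom(m,k) / (k·λ₁ + (m−k)·λ₂ − (m−4))] · (λ₂/√17)^k · (−λ₁/√17)^{m−k}, where λ₁ = (3−√17)/2 and λ₂ = (3+√17)/2. Then det B_m(3) ≠ 0 if and only if (−4/3)·(m−3)·Δ(m) ≠ 1 (i.e. if and only if Δ(m)^{−1} ≠ −(4/3)(m−3)). -/

import Mathlib

/-- The matrix `B_m(3)` of the paper: `(m-1) × (m-1)`, first row
`(B_m(3))_{0,j} = j + 3`, and for `1 ≤ i ≤ m-2`: `(B_m(3))_{i,i-1} = m - 1 - i`,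
`(B_m(3))_{i,i} = 3i + 10 - m`, `(B_m(3))_{i,i+1} = 2(i+3)`, all other entries `0`. -/
noncomputable def paperB3 (m : ℕ) : Matrix (Fin (m - 1)) (Fin (m - 1)) ℝ :=
  Matrix.of fun i j =>
    if (i : ℕ) = 0 then ((j : ℕ) : ℝ) + 3
    else if (i : ℕ) = (j : ℕ) then 3 * ((i : ℕ) : ℝ) + 10 - (m : ℝ)
    else if (i : ℕ) = (j : ℕ) + 1 then (m : ℝ) - 1 - ((i : ℕ) : ℝ)
    else if (j : ℕ) = (i : ℕ) + 1 then 2 * (((i : ℕ) : ℝ) + 3)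
    else 0

/-- The quantity `Δ(m)` of the paper, with `λ₁ = (3-√17)/2` and
`λ₂ = (3+√17)/2` (so `λ₂ - λ₁ = √17`). -/
noncomputable def paperDelta (m : ℕ) : ℝ :=
  ∑ k ∈ Finset.range (m + 1),
    (Nat.choose m k : ℝ) /
        ((k : ℝ) * ((3 - Real.sqrt 17) / 2) + ((m : ℝ) - (k : ℝ)) * ((3 + Real.sqrt 17) / 2)
          - ((m : ℝ) - 4)) *
      (((3 + Real.sqrt 17) / 2) / Real.sqrt 17) ^ k *
      ((-((3 - Real.sqrt 17) / 2)) / Real.sqrt 17) ^ (m - k)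

open Finset

namespace PaperAux

noncomputable def ss : ℝ := Real.sqrt 17
noncomputable def xx : ℝ := (3 - ss)/2
noncomputable def yy : ℝ := (3 + ss)/2
noncomputable def AA (m : ℕ) : ℝ := ((m:ℝ)*yy - (2*m+4))/ss
noncomputable def BB (m : ℕ) : ℝ := ((2*(m:ℝ)+4) - m*xx)/ss
noncomputable def gb (a : ℝ) (k : ℕ) : ℝ := (∏ i ∈ Finset.range k, (a - i)) / (k.factorial : ℝ)
noncomputable def cc (m k : ℕ) : ℝ := gb (AA m) k * (-xx)^k
noncomputable def dd (m k : ℕ) : ℝ := gb (BB m) k * (-yy)^k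
noncomputable def vv (m r : ℕ) : ℝ := ∑ k ∈ range (r+1), cc m k * dd m (r-k)
noncomputable def PP (m : ℕ) : ℝ := ∏ j ∈ Finset.range (m+1), (AA m - j)

lemma ss_sq : ss^2 = 17 := Real.sq_sqrt (by norm_num)
lemma ss_pos : 0 < ss := Real.sqrt_pos.mpr (by norm_num)
lemma ss_ne : ss ≠ 0 := ne_of_gt ss_pos
lemma irr_ss : Irrational ss := (by norm_num : Nat.Prime 17).irrational_sqrt

lemma mul_int_ne (a b : ℤ) (ha : a ≠ 0) : ss * (a:ℝ) ≠ (b:ℝ) := by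
  intro h
  apply irr_ss.ne_rat ((b:ℚ)/(a:ℚ))
  have ha' : (a:ℝ) ≠ 0 := Int.cast_ne_zero.mpr ha
  push_cast
  field_simp
  linarith [h]

lemma hxy : xx * yy = -2 := by
  unfold xx yy; linear_combination (-(1:ℝ)/4) * ss_sq
lemma hxpy : xx + yy = 3 := by unfold xx yy; ring
lemma hymx : yy - xx = ss := by unfold xx yy; ring
lemma xx_ne : xx ≠ 0 := by
  unfold xx; intro h; nlinarith [ss_sq, ss_pos]
lemma yy_pos : 0 < yy := by unfold yy; linarith [ss_pos]
lemma yy_ne : yy ≠ 0 := ne_of_gt yy_pos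

lemma sAA (m : ℕ) : ss * AA m = (m:ℝ)*yy - (2*m+4) := by
  rw [AA, mul_div_cancel₀ _ ss_ne]
lemma sBB (m : ℕ) : ss * BB m = (2*(m:ℝ)+4) - m*xx := by
  rw [BB, mul_div_cancel₀ _ ss_ne]
lemma hAB (m : ℕ) : AA m + BB m = m := by
  have h : ss * (AA m + BB m) = ss * m := by
    have h1 := sAA m; have h2 := sBB m
    have h3 := hymx
    linear_combination h1 + h2 + (m:ℝ) * h3
  exact mul_left_cancel₀ ss_ne h
lemma hxAyB (m : ℕ) : xx * AA m + yy * BB m = 2*m+4 := by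
  have h : ss * (xx * AA m + yy * BB m) = ss * (2*m+4) := by
    linear_combination xx * sAA m + yy * sBB m + (2*(m:ℝ)+4) * hymx
  exact mul_left_cancel₀ ss_ne h
lemma hAyBx (m : ℕ) : AA m * yy + BB m * xx = (m:ℝ) - 4 := by
  have h : ss * (AA m * yy + BB m * xx) = ss * ((m:ℝ) - 4) := by
    linear_combination yy * sAA m + xx * sBB m
      + ((m:ℝ)*(yy+xx) - (2*(m:ℝ)+4)) * hymx + (m:ℝ)*ss*hxpy
  exact mul_left_cancel₀ ss_ne h

lemma A_sub_ne (m k : ℕ) : AA m - (k:ℝ) ≠ 0 := by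
  intro h
  have e : ss * (k:ℝ) = (m:ℝ)*yy - (2*m+4) := by
    rw [← sAA m]; rw [sub_eq_zero] at h; rw [h]
  have h2 : ss * (2*(k:ℝ) - m) = -((m:ℝ)+8) := by
    unfold yy at e; linear_combination 2*e
  by_cases hc : (2*(k:ℤ) - m) = 0
  · have : (2*(k:ℝ) - m) = 0 := by exact_mod_cast hc
    rw [this, mul_zero] at h2
    have : (0:ℝ) < (m:ℝ) + 8 := by positivity
    linarith
  · apply mul_int_ne (2*(k:ℤ) - m) (-((m:ℤ)+8)) hc
    push_cast
    push_cast; convert h2 using 2 <;> ring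

lemma B_sub_ne (m k : ℕ) : BB m - (k:ℝ) ≠ 0 := by
  intro h
  have e : ss * (k:ℝ) = (2*(m:ℝ)+4) - m*xx := by
    rw [← sBB m]; rw [sub_eq_zero] at h; rw [h]
  have h2 : ss * (2*(k:ℝ) - m) = ((m:ℝ)+8) := by
    unfold xx at e; linear_combination 2*e
  by_cases hc : (2*(k:ℤ) - m) = 0
  · have : (2*(k:ℝ) - m) = 0 := by exact_mod_cast hc
    rw [this, mul_zero] at h2
    have : (0:ℝ) < (m:ℝ) + 8 := by positivity
    linarith
  · apply mul_int_ne (2*(k:ℤ) - m) ((m:ℤ)+8) hc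
    push_cast
    push_cast; convert h2 using 2 <;> ring

lemma PP_ne (m : ℕ) : PP m ≠ 0 :=
  Finset.prod_ne_zero_iff.mpr fun j _ => A_sub_ne m j


lemma gb_zero (a : ℝ) : gb a 0 = 1 := by simp [gb]
lemma gb_one (a : ℝ) : gb a 1 = a := by simp [gb]
lemma gb_succ (a : ℝ) (k : ℕ) : ((k:ℝ)+1) * gb a (k+1) = (a - k) * gb a k := by
  unfold gb
  rw [Finset.prod_range_succ, Nat.factorial_succ]
  have h1 : ((k.factorial : ℝ)) ≠ 0 := Nat.cast_ne_zero.mpr (Nat.factorial_ne_zero k)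
  have h2 : ((k:ℝ)+1) ≠ 0 := by positivity
  field_simp
  push_cast
  ring

lemma cc_zero (m : ℕ) : cc m 0 = 1 := by simp [cc, gb_zero]
lemma dd_zero (m : ℕ) : dd m 0 = 1 := by simp [dd, gb_zero]
lemma cc_one (m : ℕ) : cc m 1 = AA m * (-xx) := by simp [cc, gb_one]
lemma dd_one (m : ℕ) : dd m 1 = BB m * (-yy) := by simp [dd, gb_one]

lemma cc_succ (m k : ℕ) : ((k:ℝ)+1) * cc m (k+1) = -xx * (AA m - k) * cc m k := by
  unfold cc
  rw [pow_succ]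
  have h := gb_succ (AA m) k
  linear_combination ((-xx)^k * (-xx)) * h
lemma dd_succ (m k : ℕ) : ((k:ℝ)+1) * dd m (k+1) = -yy * (BB m - k) * dd m k := by
  unfold dd
  rw [pow_succ]
  have h := gb_succ (BB m) k
  linear_combination ((-yy)^k * (-yy)) * h

lemma vv_zero (m : ℕ) : vv m 0 = 1 := by
  simp [vv, cc_zero, dd_zero]
lemma vv_one (m : ℕ) : vv m 1 = -(2*(m:ℝ)+4) := by
  rw [vv]
  rw [Finset.sum_range_succ, Finset.sum_range_one]
  simp only [Nat.sub_self, Nat.sub_zero]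
  rw [cc_zero, dd_zero, cc_one, dd_one]
  have := hxAyB m
  ring_nf
  ring_nf at this
  linarith

noncomputable def pp (m r : ℕ) : ℝ := ∑ k ∈ range (r+1), (k:ℝ) * (cc m k * dd m (r-k))
noncomputable def qq (m r : ℕ) : ℝ := ∑ k ∈ range (r+1), ((r:ℝ)-(k:ℝ)) * (cc m k * dd m (r-k))

lemma ppqq (m r : ℕ) : pp m r + qq m r = (r:ℝ) * vv m r := by
  unfold pp qq vv
  rw [← Finset.sum_add_distrib, Finset.mul_sum]
  apply Finset.sum_congr rfl
  intro k _; ring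

lemma pp_rec (m n : ℕ) : pp m (n+1) = -xx * AA m * vv m n + xx * pp m n := by
  have h0 := Finset.sum_range_succ' (fun k : ℕ => ((k:ℕ):ℝ) * (cc m k * dd m ((n+1)-k))) (n+1)
  have hpp : pp m (n+1) = ∑ k ∈ range (n+1), (((k+1:ℕ)):ℝ) * (cc m (k+1) * dd m ((n+1)-(k+1))) := by
    unfold pp
    rw [h0]; simp
  rw [hpp]
  have hterm : ∀ k : ℕ, (((k+1:ℕ)):ℝ) * (cc m (k+1) * dd m ((n+1)-(k+1)))
      = (-xx * (AA m - k) * cc m k) * dd m (n-k) := by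
    intro k
    have h := cc_succ m k
    have hnk : n + 1 - (k+1) = n - k := by omega
    rw [hnk]
    push_cast
    linear_combination (dd m (n-k)) * h
  calc ∑ k ∈ range (n+1), (((k+1:ℕ)):ℝ) * (cc m (k+1) * dd m ((n+1)-(k+1)))
      = ∑ k ∈ range (n+1), ((-xx * (AA m - k) * cc m k) * dd m (n-k)) :=
        Finset.sum_congr rfl fun k _ => hterm k
    _ = -xx * AA m * vv m n + xx * pp m n := by
        unfold vv pp
        rw [Finset.mul_sum, Finset.mul_sum, ← Finset.sum_add_distrib]
        exact Finset.sum_congr rfl fun k _ => by ring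

lemma qq_reflect (m r : ℕ) : qq m r = ∑ k ∈ range (r+1), (k:ℝ) * (cc m (r-k) * dd m k) := by
  unfold qq
  rw [← Finset.sum_range_reflect (fun k => (k:ℝ) * (cc m (r-k) * dd m k)) (r+1)]
  apply Finset.sum_congr rfl
  intro k hk
  rw [Finset.mem_range] at hk
  have h1 : r + 1 - 1 - k = r - k := by omega
  have h2 : r - (r - k) = k := by omega
  rw [h1, h2]
  have h3 : ((r - k : ℕ):ℝ) = (r:ℝ) - k := by
    have : k ≤ r := by omega
    push_cast [this]; ring
  rw [h3]

lemma qq_rec (m n : ℕ) : qq m (n+1) = -yy * BB m * vv m n + yy * qq m n := by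
  have h0 := Finset.sum_range_succ' (fun k : ℕ => ((k:ℕ):ℝ) * (cc m ((n+1)-k) * dd m k)) (n+1)
  have hqq : qq m (n+1) = ∑ k ∈ range (n+1), (((k+1:ℕ)):ℝ) * (cc m ((n+1)-(k+1)) * dd m (k+1)) := by
    rw [qq_reflect, h0]; simp
  rw [hqq]
  have hterm : ∀ k : ℕ, (((k+1:ℕ)):ℝ) * (cc m ((n+1)-(k+1)) * dd m (k+1))
      = (-yy * (BB m - k) * dd m k) * cc m (n-k) := by
    intro k
    have h := dd_succ m k
    have hnk : n + 1 - (k+1) = n - k := by omega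
    rw [hnk]
    push_cast
    linear_combination (cc m (n-k)) * h
  have hvrefl : vv m n = ∑ k ∈ range (n+1), cc m (n-k) * dd m k := by
    unfold vv
    rw [← Finset.sum_range_reflect (fun k : ℕ => cc m (n-k) * dd m k) (n+1)]
    refine Finset.sum_congr rfl fun k hk => ?_
    rw [Finset.mem_range] at hk
    have h1 : n + 1 - 1 - k = n - k := by omega
    have h2 : n - (n - k) = k := by omega
    rw [h1, h2]
  calc ∑ k ∈ range (n+1), (((k+1:ℕ)):ℝ) * (cc m ((n+1)-(k+1)) * dd m (k+1))
      = ∑ k ∈ range (n+1), ((-yy * (BB m - k) * dd m k) * cc m (n-k)) :=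
        Finset.sum_congr rfl fun k _ => hterm k
    _ = -yy * BB m * vv m n + yy * qq m n := by
        rw [hvrefl, qq_reflect]
        rw [Finset.mul_sum, Finset.mul_sum, ← Finset.sum_add_distrib]
        exact Finset.sum_congr rfl fun k _ => by ring


lemma xsq : xx^2 = 3*xx + 2 := by unfold xx; linear_combination (1/4 : ℝ) * ss_sq
lemma ysq : yy^2 = 3*yy + 2 := by unfold yy; linear_combination (1/4 : ℝ) * ss_sq

lemma ss_eq (m n : ℕ) : xx * pp m n + yy * qq m n
    = ((n:ℝ)+1) * vv m (n+1) + (2*(m:ℝ)+4) * vv m n := by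
  have h1 := ppqq m (n+1)
  have h2 := pp_rec m n
  have h3 := qq_rec m n
  have h4 := hxAyB m
  push_cast at h1
  linear_combination h1 - h2 - h3 + (vv m n) * h4

lemma vv_rec (m n : ℕ) : ((n:ℝ)+2) * vv m (n+2) + (2*(m:ℝ)+4-3*((n:ℝ)+1)) * vv m (n+1)
    + 2*((m:ℝ)-(n:ℝ)) * vv m n = 0 := by
  have e1 := ss_eq m (n+1)
  have e2 := pp_rec m n
  have e3 := qq_rec m n
  have e4 := ss_eq m n
  have e5 := ppqq m n
  have h1 := hxAyB m
  have h2 := hAB m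
  have ex := xsq
  have ey := ysq
  push_cast at e1
  linear_combination -e1 + xx * e2 + yy * e3 + (pp m n - AA m * vv m n) * ex
    + (qq m n - BB m * vv m n) * ey + 3 * e4 + 2 * e5
    - 3 * (vv m n) * h1 - 2 * (vv m n) * h2

noncomputable def tt (m r : ℕ) : ℝ :=
  (((m:ℝ)-(r:ℝ))/2 + 1) * vv m r + (((r:ℝ)+1)/4) * vv m (r+1)

lemma tele (m r : ℕ) : ((m:ℝ)+1-(r:ℝ)) * vv m r = tt m r - tt m (r+1) := by
  unfold tt
  have h := vv_rec m r
  push_cast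
  linear_combination (1/4 : ℝ) * h

noncomputable def SS (m : ℕ) : ℝ := ∑ r ∈ range (m-1), ((m:ℝ)+1-(r:ℝ)) * vv m r

lemma SS_eq (m : ℕ) (hm : 4 ≤ m) :
    SS m = -(3/2) * vv m (m-1) - ((m:ℝ)/4) * vv m m := by
  unfold SS
  rw [Finset.sum_congr rfl (fun r _ => tele m r), Finset.sum_range_sub' (tt m) (m-1)]
  have h0 : tt m 0 = 0 := by
    rw [tt, vv_zero, vv_one]
    push_cast
    ring
  have hm1 : (m - 1) + 1 = m := by omega
  have hc : ((m-1 : ℕ):ℝ) = (m:ℝ) - 1 := by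
    have : 1 ≤ m := by omega
    push_cast [this]; ring
  rw [h0, tt, hm1, hc]
  ring


noncomputable def TT (m : ℕ) : ℝ :=
  ∑ k ∈ range (m+1), (m.choose k : ℝ) * (-xx)^k * yy^(m-k) / (AA m - k)
noncomputable def UU1 (m : ℕ) : ℝ :=
  ∑ k ∈ range m, ((m-1).choose k : ℝ) * (-xx)^k * yy^(m-1-k) / (AA m - k)
noncomputable def UU2 (m : ℕ) : ℝ :=
  ∑ k ∈ range m, ((m-1).choose k : ℝ) * (-xx)^k * yy^(m-1-k) / (AA m - ((k:ℝ)+1))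

lemma A_sub_ne' (m k : ℕ) : AA m - ((k:ℝ)+1) ≠ 0 := by
  have h := A_sub_ne m (k+1)
  push_cast at h
  exact h

lemma prod_neg' (N : ℕ) (g : ℕ → ℝ) :
    ∏ i ∈ range N, (-(g i)) = (-1:ℝ)^N * ∏ i ∈ range N, g i := by
  have h : ∀ i, -(g i) = (-1:ℝ) * g i := fun i => by ring
  simp_rw [h]
  rw [Finset.prod_mul_distrib, Finset.prod_const, Finset.card_range]

lemma BA (m : ℕ) (i : ℕ) : BB m - (i:ℝ) = -(AA m - ((m:ℝ) - i)) := by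
  have := hAB m; linarith

lemma prod_refl1 (m k : ℕ) (hk : k ≤ m) :
    (∏ i ∈ range (m-k), (BB m - (i:ℝ))) = (-1:ℝ)^(m-k) * ∏ j ∈ range (m-k), (AA m - ((k+1+j : ℕ):ℝ)) := by
  have h1 : (∏ i ∈ range (m-k), (BB m - (i:ℝ)))
      = ∏ i ∈ range (m-k), (-(AA m - ((m:ℝ) - i))) :=
    Finset.prod_congr rfl fun i _ => BA m i
  rw [h1, prod_neg' (m-k) (fun i => AA m - ((m:ℝ) - i))]
  congr 1
  rw [← Finset.prod_range_reflect (fun j => AA m - ((k+1+j : ℕ):ℝ)) (m-k)]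
  refine Finset.prod_congr rfl fun i hi => ?_
  rw [Finset.mem_range] at hi
  congr 1
  have h2 : k+1+(m-k-1-i) = m - i := by omega
  rw [h2]
  have h3 : i ≤ m := by omega
  push_cast [Nat.cast_sub h3]
  ring

lemma prod_lemma1 (m k : ℕ) (hk : k ≤ m) :
    (∏ i ∈ range k, (AA m - (i:ℝ))) * (∏ i ∈ range (m-k), (BB m - (i:ℝ))) * (AA m - k)
      = (-1:ℝ)^(m-k) * PP m := by
  rw [prod_refl1 m k hk]
  have hPP : PP m = (∏ i ∈ range (k+1), (AA m - (i:ℝ))) * ∏ j ∈ range (m-k), (AA m - ((k+1+j : ℕ):ℝ)) := by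
    unfold PP
    have hs : m + 1 = (k+1) + (m-k) := by omega
    rw [hs, Finset.prod_range_add]
  rw [hPP, Finset.prod_range_succ]
  ring

lemma prod_refl2 (m k : ℕ) (hk : k + 1 ≤ m) :
    (∏ i ∈ range (m-1-k), (BB m - (i:ℝ))) = (-1:ℝ)^(m-1-k) * ∏ j ∈ range (m-1-k), (AA m - ((k+2+j : ℕ):ℝ)) := by
  have h1 : (∏ i ∈ range (m-1-k), (BB m - (i:ℝ)))
      = ∏ i ∈ range (m-1-k), (-(AA m - ((m:ℝ) - i))) :=
    Finset.prod_congr rfl fun i _ => BA m i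
  rw [h1, prod_neg' (m-1-k) (fun i => AA m - ((m:ℝ) - i))]
  congr 1
  rw [← Finset.prod_range_reflect (fun j => AA m - ((k+2+j : ℕ):ℝ)) (m-1-k)]
  refine Finset.prod_congr rfl fun i hi => ?_
  rw [Finset.mem_range] at hi
  congr 1
  have h2 : k+2+(m-1-k-1-i) = m - i := by omega
  rw [h2]
  have h3 : i ≤ m := by omega
  push_cast [Nat.cast_sub h3]
  ring

lemma prod_lemma2 (m k : ℕ) (hk : k + 1 ≤ m) :
    (∏ i ∈ range k, (AA m - (i:ℝ))) * (∏ i ∈ range (m-1-k), (BB m - (i:ℝ)))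
      * ((AA m - k) * (AA m - ((k:ℝ)+1)))
      = (-1:ℝ)^(m-1-k) * PP m := by
  rw [prod_refl2 m k hk]
  have hPP : PP m = (∏ i ∈ range (k+2), (AA m - (i:ℝ))) * ∏ j ∈ range (m-1-k), (AA m - ((k+2+j : ℕ):ℝ)) := by
    unfold PP
    have hs : m + 1 = (k+2) + (m-1-k) := by omega
    rw [hs, Finset.prod_range_add]
  rw [hPP, Finset.prod_range_succ, Finset.prod_range_succ]
  push_cast
  ring

lemma fact_ne (n : ℕ) : ((n.factorial : ℝ)) ≠ 0 := Nat.cast_ne_zero.mpr (Nat.factorial_ne_zero n)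

lemma vm_eq (m : ℕ) : vv m m = PP m / (m.factorial : ℝ) * TT m := by
  unfold vv TT
  rw [Finset.mul_sum]
  refine Finset.sum_congr rfl fun k hk => ?_
  rw [Finset.mem_range] at hk
  have hk' : k ≤ m := by omega
  have hprod := prod_lemma1 m k hk'
  have hfact : ((m.choose k : ℕ):ℝ) * (k.factorial:ℝ) * ((m-k).factorial:ℝ) = (m.factorial:ℝ) := by
    exact_mod_cast congrArg (Nat.cast : ℕ → ℝ) (Nat.choose_mul_factorial_mul_factorial hk')
  unfold cc dd gb
  have hyy : (-yy)^(m-k) = (-1:ℝ)^(m-k) * yy^(m-k) := by rw [neg_pow]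
  rw [hyy]
  have hA := A_sub_ne m k
  have hsq : ((-1:ℝ)^(m-k))*((-1:ℝ)^(m-k)) = 1 := by
    rw [← pow_add]; exact Even.neg_one_pow ⟨m-k, by ring⟩
  field_simp
  linear_combination (((-1:ℝ)^(m-k)) * (-xx)^k * yy^(m-k) * (m.factorial:ℝ)) * hprod
    - (PP m * (-xx)^k * yy^(m-k)) * hfact
    + (PP m * (-xx)^k * yy^(m-k) * (m.factorial:ℝ)) * hsq

lemma vm1_eq (m : ℕ) (hm : 1 ≤ m) :
    vv m (m-1) = PP m / (((m-1).factorial : ℝ)) * (UU2 m - UU1 m) := by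
  have hm1 : (m-1) + 1 = m := by omega
  unfold vv UU1 UU2
  rw [hm1, ← Finset.sum_sub_distrib, Finset.mul_sum]
  refine Finset.sum_congr rfl fun k hk => ?_
  rw [Finset.mem_range] at hk
  have hk' : k + 1 ≤ m := by omega
  have hprod := prod_lemma2 m k hk'
  have hfact : (((m-1).choose k : ℕ):ℝ) * (k.factorial:ℝ) * ((m-1-k).factorial:ℝ) = ((m-1).factorial:ℝ) := by
    have : k ≤ m - 1 := by omega
    exact_mod_cast congrArg (Nat.cast : ℕ → ℝ) (Nat.choose_mul_factorial_mul_factorial this)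
  unfold cc dd gb
  have hyy : (-yy)^(m-1-k) = (-1:ℝ)^(m-1-k) * yy^(m-1-k) := by rw [neg_pow]
  rw [hyy]
  have hA := A_sub_ne m k
  have hA' := A_sub_ne' m k
  have hsq : ((-1:ℝ)^(m-1-k))*((-1:ℝ)^(m-1-k)) = 1 := by
    rw [← pow_add]; exact Even.neg_one_pow ⟨m-1-k, by ring⟩
  field_simp
  linear_combination (((-1:ℝ)^(m-1-k)) * (-xx)^k * yy^(m-1-k) * (((m-1).factorial:ℝ))) * hprod
    - (PP m * (-xx)^k * yy^(m-1-k)) * hfact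
    + (PP m * (-xx)^k * yy^(m-1-k) * (((m-1).factorial:ℝ))) * hsq


lemma binom_sum (m : ℕ) : ∑ k ∈ range (m+1), (m.choose k : ℝ) * (-xx)^k * yy^(m-k) = ss^m := by
  have h := add_pow (-xx) yy m
  rw [← hymx]
  have : yy - xx = -xx + yy := by ring
  rw [this, h]
  refine Finset.sum_congr rfl fun k _ => by ring

lemma rel2 (m : ℕ) (hm : 1 ≤ m) : -(m:ℝ) * xx * UU2 m = AA m * TT m - ss^m := by
  have key : ∑ k ∈ range (m+1), (k:ℝ) * ((m.choose k : ℝ) * (-xx)^k * yy^(m-k) / (AA m - k))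
      = -(m:ℝ) * xx * UU2 m := by
    rw [Finset.sum_range_succ' (fun k : ℕ => ((k:ℕ):ℝ) * ((m.choose k : ℝ) * (-xx)^k * yy^(m-k) / (AA m - k))) m]
    simp only [Nat.cast_zero, zero_mul, add_zero]
    unfold UU2
    rw [show -(m:ℝ) * xx * ∑ k ∈ range m, ((m-1).choose k : ℝ) * (-xx)^k * yy^(m-1-k) / (AA m - ((k:ℝ)+1))
        = ∑ k ∈ range m, (-(m:ℝ) * xx * (((m-1).choose k : ℝ) * (-xx)^k * yy^(m-1-k) / (AA m - ((k:ℝ)+1)))) from by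
      rw [Finset.mul_sum]]
    refine Finset.sum_congr rfl fun k hk => ?_
    rw [Finset.mem_range] at hk
    have hchoose : ((k:ℝ)+1) * (m.choose (k+1) : ℝ) = (m:ℝ) * ((m-1).choose k : ℝ) := by
      have h := Nat.add_one_mul_choose_eq (m-1) k
      have hm1 : (m-1)+1 = m := by omega
      rw [hm1] at h
      have := congrArg (Nat.cast : ℕ → ℝ) h
      push_cast at this
      linarith
    have hpow : (-xx)^(k+1) = (-xx)^k * (-xx) := pow_succ _ _
    have hsub : m - (k+1) = m-1-k := by omega
    have hA' := A_sub_ne' m k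
    rw [hsub, hpow]
    push_cast
    rw [← mul_div_assoc, ← mul_div_assoc]
    rw [div_eq_div_iff hA' hA']
    linear_combination ((-xx)^k * yy^(m-1-k) * (-xx) * (AA m - ((k:ℝ)+1))) * hchoose
  rw [← key]
  have key2 : ∀ k ∈ range (m+1), (k:ℝ) * ((m.choose k : ℝ) * (-xx)^k * yy^(m-k) / (AA m - k))
      = AA m * ((m.choose k : ℝ) * (-xx)^k * yy^(m-k) / (AA m - k)) - (m.choose k : ℝ) * (-xx)^k * yy^(m-k) := by
    intro k _
    have hA := A_sub_ne m k
    field_simp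
    ring
  rw [Finset.sum_congr rfl key2, Finset.sum_sub_distrib, binom_sum]
  unfold TT
  rw [Finset.mul_sum]

lemma rel3 (m : ℕ) (hm : 1 ≤ m) : (m:ℝ) * yy * UU1 m = ss^m + ((m:ℝ) - AA m) * TT m := by
  have key : ∑ k ∈ range (m+1), ((m:ℝ)-(k:ℝ)) * ((m.choose k : ℝ) * (-xx)^k * yy^(m-k) / (AA m - k))
      = (m:ℝ) * yy * UU1 m := by
    have hterm : ∀ k ∈ range (m+1), ((m:ℝ)-(k:ℝ)) * ((m.choose k : ℝ) * (-xx)^k * yy^(m-k) / (AA m - k))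
        = (m:ℝ) * (((m-1).choose k : ℝ) * (-xx)^k * yy^(m-k) / (AA m - k)) := by
      intro k hk
      rw [Finset.mem_range] at hk
      have hk' : k ≤ m := by omega
      have hchoose : (m:ℝ) * ((m-1).choose k : ℝ) = (m.choose k : ℝ) * ((m:ℝ)-(k:ℝ)) := by
        have h1 := Nat.add_one_mul_choose_eq (m-1) k
        have hm1 : (m-1)+1 = m := by omega
        rw [hm1] at h1
        have h2 := Nat.choose_succ_right_eq m k
        have e1 := congrArg (Nat.cast : ℕ → ℝ) h1
        have e2 := congrArg (Nat.cast : ℕ → ℝ) h2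
        push_cast [Nat.cast_sub hk'] at e1 e2
        nlinarith [e1, e2]
      rw [← mul_div_assoc, ← mul_div_assoc]
      congr 1
      linear_combination (-((-xx)^k * yy^(m-k))) * hchoose
    rw [Finset.sum_congr rfl hterm]
    rw [Finset.sum_range_succ]
    have hlast : ((m-1).choose m : ℝ) = 0 := by
      rw [Nat.choose_eq_zero_of_lt (by omega)]; norm_num
    rw [hlast]
    simp only [zero_mul, mul_zero, zero_div, add_zero]
    unfold UU1
    rw [Finset.mul_sum]
    refine Finset.sum_congr rfl fun k hk => ?_
    rw [Finset.mem_range] at hk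
    have hpow : yy^(m-k) = yy * yy^(m-1-k) := by
      have : m - k = (m-1-k) + 1 := by omega
      rw [this, pow_succ]; ring
    rw [hpow]
    ring
  rw [← key]
  have key2 : ∀ k ∈ range (m+1), ((m:ℝ)-(k:ℝ)) * ((m.choose k : ℝ) * (-xx)^k * yy^(m-k) / (AA m - k))
      = ((m:ℝ) - AA m) * ((m.choose k : ℝ) * (-xx)^k * yy^(m-k) / (AA m - k)) + (m.choose k : ℝ) * (-xx)^k * yy^(m-k) := by
    intro k _
    have hA := A_sub_ne m k
    field_simp
    ring
  rw [Finset.sum_congr rfl key2, Finset.sum_add_distrib, binom_sum]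
  unfold TT
  rw [Finset.mul_sum]
  ring

lemma rel_comb (m : ℕ) (hm : 1 ≤ m) :
    2*(m:ℝ)*(UU2 m - UU1 m) = ((m:ℝ)-4)*TT m - ss^(m+1) := by
  have h1 := rel2 m hm
  have h2 := rel3 m hm
  have h3 : (m:ℝ) - AA m = BB m := by have := hAB m; linarith
  rw [h3] at h2
  have hx := hxy
  have hy := hymx
  have hA := hAyBx m
  have key : (xx*yy) * (2*(m:ℝ)*(UU2 m - UU1 m)) = (xx*yy) * (((m:ℝ)-4)*TT m - ss^(m+1)) := by
    have hp : ss^(m+1) = ss^m * ss := pow_succ _ _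
    rw [hp]
    linear_combination (-2*yy) * h1 - 2*xx*h2 - 2*(TT m)*hA + 2*(ss^m)*hy
      + ((4-(m:ℝ))*TT m + ss*ss^m)*hx
  have hne : xx*yy ≠ 0 := by rw [hxy]; norm_num
  exact mul_left_cancel₀ hne key

lemma TT_delta (m : ℕ) : TT m = -(ss^(m+1)) * paperDelta m := by
  have hPD : paperDelta m = ∑ k ∈ range (m+1),
      (m.choose k : ℝ) / ((k:ℝ) * xx + ((m:ℝ)-(k:ℝ)) * yy - ((m:ℝ)-4)) * (yy/ss)^k * ((-xx)/ss)^(m-k) := rfl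
  rw [hPD]
  rw [← Finset.sum_range_reflect (fun k => (m.choose k : ℝ) / ((k:ℝ) * xx + ((m:ℝ)-(k:ℝ)) * yy - ((m:ℝ)-4)) * (yy/ss)^k * ((-xx)/ss)^(m-k)) (m+1)]
  unfold TT
  rw [Finset.mul_sum]
  refine Finset.sum_congr rfl fun k hk => ?_
  rw [Finset.mem_range] at hk
  have hk' : k ≤ m := by omega
  have e1 : m + 1 - 1 - k = m - k := by omega
  have e2 : m - (m - k) = k := by omega
  rw [e1, e2]
  have e3 : ((m-k : ℕ):ℝ) = (m:ℝ) - (k:ℝ) := by push_cast [Nat.cast_sub hk']; ring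
  have e4 : (m.choose (m-k) : ℝ) = (m.choose k : ℝ) := by
    rw [Nat.choose_symm hk']
  rw [e3, e4]
  have hden : ((m:ℝ)-(k:ℝ)) * xx + ((m:ℝ)-((m:ℝ)-(k:ℝ))) * yy - ((m:ℝ)-4) = -(ss*(AA m - k)) := by
    have h1 := sAA m
    have h2 := hymx
    have h3 := hxpy
    linear_combination h1 + (k:ℝ)*h2 + (m:ℝ)*h3
  rw [hden]
  have hA := A_sub_ne m k
  have hss := ss_ne
  rw [div_pow, div_pow]
  rw [show ss^(m+1) = (ss^(m-k) * ss^k) * ss from by rw [← pow_add, ← pow_succ]; congr 1; omega]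
  field_simp

lemma SS_formula (m : ℕ) (hm : 4 ≤ m) :
    SS m = (3 * PP m * ss^(m+1) / (4 * (m.factorial:ℝ))) * (1 + (4/3)*((m:ℝ)-3) * paperDelta m) := by
  have hm1 : 1 ≤ m := by omega
  have e0 := SS_eq m hm
  have e1 := vm_eq m
  have e2 := vm1_eq m hm1
  have e3 := rel_comb m hm1
  have e4 := TT_delta m
  have hfs : (m.factorial : ℝ) = (m:ℝ) * ((m-1).factorial : ℝ) := by
    have : m.factorial = m * (m-1).factorial := by
      conv_lhs => rw [show m = (m-1)+1 from by omega]
      rw [Nat.factorial_succ]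
      congr 1; omega
    rw [this]; push_cast; ring
  rw [e0, e1, e2, e4]
  rw [hfs]
  have hmne : (m:ℝ) ≠ 0 := by positivity
  have hfne := fact_ne (m-1)
  field_simp
  rw [e4] at e3
  linear_combination (-6 * PP m) * e3


lemma SS_ne_iff (m : ℕ) (hm : 4 ≤ m) :
    SS m ≠ 0 ↔ (-(4 / 3)) * ((m : ℝ) - 3) * paperDelta m ≠ 1 := by
  rw [SS_formula m hm]
  have hC : (3 * PP m * ss^(m+1) / (4 * (m.factorial:ℝ))) ≠ 0 := by
    apply div_ne_zero
    · exact mul_ne_zero (mul_ne_zero (by norm_num) (PP_ne m)) (pow_ne_zero _ ss_ne)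
    · exact mul_ne_zero (by norm_num) (fact_ne m)
  rw [mul_ne_zero_iff]
  constructor
  · rintro ⟨-, h⟩ heq
    apply h
    linear_combination -heq
  · intro h
    refine ⟨hC, fun heq => h ?_⟩
    linear_combination -heq

noncomputable def uvec (m : ℕ) : Fin (m-1) → ℝ := fun j => vv m (m-2-(j:ℕ))

lemma mulVec_apply (m : ℕ) (z : Fin (m-1) → ℝ) (i : Fin (m-1)) :
    (paperB3 m).mulVec z i = ∑ j : Fin (m-1), paperB3 m i j * z j := by
  simp [Matrix.mulVec, dotProduct]

lemma row_mid (m : ℕ) (hm : 4 ≤ m) (z : Fin (m-1) → ℝ) (i : Fin (m-1))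
    (h1 : 1 ≤ (i:ℕ)) (h2 : (i:ℕ) ≤ m-3) :
    (paperB3 m).mulVec z i
      = ((m:ℝ)-1-((i:ℕ):ℝ)) * z ⟨(i:ℕ)-1, by omega⟩
        + (3*((i:ℕ):ℝ)+10-(m:ℝ)) * z i
        + 2*(((i:ℕ):ℝ)+3) * z ⟨(i:ℕ)+1, by omega⟩ := by
  have hn : (i:ℕ) < m-1 := i.isLt
  have key : ∀ j : Fin (m-1), paperB3 m i j * z j =
      (if j = ⟨(i:ℕ)-1, by omega⟩ then ((m:ℝ)-1-((i:ℕ):ℝ)) * z j else 0)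
    + (if j = i then (3*((i:ℕ):ℝ)+10-(m:ℝ)) * z j else 0)
    + (if j = ⟨(i:ℕ)+1, by omega⟩ then 2*(((i:ℕ):ℝ)+3) * z j else 0) := by
    intro j
    have hj := j.isLt
    rw [paperB3]
    simp only [Matrix.of_apply, Fin.ext_iff]
    split_ifs <;> first | ring1 | (exfalso; omega)
  rw [mulVec_apply, Finset.sum_congr rfl fun j _ => key j]
  rw [Finset.sum_add_distrib, Finset.sum_add_distrib]
  rw [Fintype.sum_ite_eq', Fintype.sum_ite_eq', Fintype.sum_ite_eq']

lemma row_last (m : ℕ) (hm : 4 ≤ m) (z : Fin (m-1) → ℝ) (i : Fin (m-1))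
    (h1 : (i:ℕ) = m-2) :
    (paperB3 m).mulVec z i
      = ((m:ℝ)-1-((i:ℕ):ℝ)) * z ⟨(i:ℕ)-1, by omega⟩
        + (3*((i:ℕ):ℝ)+10-(m:ℝ)) * z i := by
  have hn : (i:ℕ) < m-1 := i.isLt
  have key : ∀ j : Fin (m-1), paperB3 m i j * z j =
      (if j = ⟨(i:ℕ)-1, by omega⟩ then ((m:ℝ)-1-((i:ℕ):ℝ)) * z j else 0)
    + (if j = i then (3*((i:ℕ):ℝ)+10-(m:ℝ)) * z j else 0) := by
    intro j
    have hj := j.isLt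
    rw [paperB3]
    simp only [Matrix.of_apply, Fin.ext_iff]
    split_ifs <;> first | ring1 | (exfalso; omega)
  rw [mulVec_apply, Finset.sum_congr rfl fun j _ => key j]
  rw [Finset.sum_add_distrib]
  rw [Fintype.sum_ite_eq', Fintype.sum_ite_eq']

lemma row_zero (m : ℕ) (hm : 4 ≤ m) (z : Fin (m-1) → ℝ) (i : Fin (m-1))
    (h1 : (i:ℕ) = 0) :
    (paperB3 m).mulVec z i = ∑ j : Fin (m-1), (((j:ℕ):ℝ)+3) * z j := by
  rw [mulVec_apply]
  refine Finset.sum_congr rfl fun j _ => ?_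
  rw [paperB3]
  simp only [Matrix.of_apply, h1, if_pos]

lemma fin_congr {n : ℕ} (z : Fin n → ℝ) {a b : ℕ} (ha : a < n) (hb : b < n) (h : a = b) :
    z ⟨a, ha⟩ = z ⟨b, hb⟩ := by subst h; rfl

lemma row_mid' (m : ℕ) (hm : 4 ≤ m) (z : Fin (m-1) → ℝ) (i0 : ℕ) (hlt : i0 < m-1)
    (h1 : 1 ≤ i0) (h2 : i0 ≤ m-3) :
    (paperB3 m).mulVec z ⟨i0, hlt⟩
      = ((m:ℝ)-1-(i0:ℝ)) * z ⟨i0-1, by omega⟩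
        + (3*(i0:ℝ)+10-(m:ℝ)) * z ⟨i0, hlt⟩
        + 2*((i0:ℝ)+3) * z ⟨i0+1, by omega⟩ :=
  row_mid m hm z ⟨i0, hlt⟩ h1 h2

lemma row_last' (m : ℕ) (hm : 4 ≤ m) (z : Fin (m-1) → ℝ) (hlt : m-2 < m-1) :
    (paperB3 m).mulVec z ⟨m-2, hlt⟩
      = ((m:ℝ)-1-((m-2:ℕ):ℝ)) * z ⟨(m-2)-1, by omega⟩
        + (3*((m-2:ℕ):ℝ)+10-(m:ℝ)) * z ⟨m-2, hlt⟩ :=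
  row_last m hm z ⟨m-2, hlt⟩ rfl

lemma uvec_sum (m : ℕ) (hm : 4 ≤ m) :
    ∑ j : Fin (m-1), (((j:ℕ):ℝ)+3) * uvec m j = SS m := by
  have h1 : ∑ j : Fin (m-1), (((j:ℕ):ℝ)+3) * uvec m j
      = ∑ j ∈ range (m-1), ((j:ℝ)+3) * vv m (m-2-j) := by
    rw [Finset.sum_fin_eq_sum_range]
    refine Finset.sum_congr rfl fun j hj => ?_
    rw [Finset.mem_range] at hj
    rw [dif_pos hj]
    rfl
  rw [h1]
  unfold SS
  rw [← Finset.sum_range_reflect (fun r => ((m:ℝ)+1-(r:ℝ)) * vv m r) (m-1)]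
  refine Finset.sum_congr rfl fun j hj => ?_
  rw [Finset.mem_range] at hj
  have e1 : m-1-1-j = m-2-j := by omega
  rw [e1]
  have h4 : (m-2-j) + (j+2) = m := by omega
  have e2 : ((m-2-j : ℕ):ℝ) = (m:ℝ)-2-(j:ℝ) := by
    have h5 := congrArg (Nat.cast : ℕ → ℝ) h4
    push_cast at h5
    linarith
  rw [e2]
  have e3 : (m:ℝ)+1-((m:ℝ)-2-(j:ℝ)) = (j:ℝ)+3 := by ring
  rw [e3]

lemma mulVec_uvec (m : ℕ) (hm : 4 ≤ m) :
    (paperB3 m).mulVec (uvec m) = fun i : Fin (m-1) => if (i:ℕ) = 0 then SS m else 0 := by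
  funext i
  have hn : (i:ℕ) < m-1 := i.isLt
  by_cases h0 : (i:ℕ) = 0
  · rw [if_pos h0, row_zero m hm _ i h0, uvec_sum m hm]
  · rw [if_neg h0]
    by_cases hlast : (i:ℕ) = m-2
    · rw [row_last m hm _ i hlast]
      have e1 : uvec m ⟨(i:ℕ)-1, by omega⟩ = vv m 1 := by
        unfold uvec
        congr 1
        simp only []
        omega
      have e2 : uvec m i = vv m 0 := by
        unfold uvec
        congr 1
        omega
      rw [e1, e2, vv_zero, vv_one]
      have : ((i:ℕ):ℝ) = (m:ℝ)-2 := by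
        have h4 : (i:ℕ) + 2 = m := by omega
        have h5 := congrArg (Nat.cast : ℕ → ℝ) h4
        push_cast at h5
        linarith
      rw [this]
      ring
    · have h1 : 1 ≤ (i:ℕ) := by omega
      have h2 : (i:ℕ) ≤ m-3 := by omega
      rw [row_mid m hm _ i h1 h2]
      set nn := m-3-(i:ℕ) with hnn
      have e1 : uvec m ⟨(i:ℕ)-1, by omega⟩ = vv m (nn+2) := by
        unfold uvec; congr 1; simp only []; omega
      have e2 : uvec m i = vv m (nn+1) := by
        unfold uvec; congr 1; omega
      have e3 : uvec m ⟨(i:ℕ)+1, by omega⟩ = vv m nn := by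
        unfold uvec; congr 1; simp only []; omega
      rw [e1, e2, e3]
      have hrec := vv_rec m nn
      have hcast : ((i:ℕ):ℝ) = (m:ℝ)-3-(nn:ℝ) := by
        have h4 : nn + (i:ℕ) + 3 = m := by omega
        have h5 := congrArg (Nat.cast : ℕ → ℝ) h4
        push_cast at h5
        linarith
      rw [hcast]
      linear_combination hrec

lemma uvec_ne (m : ℕ) (hm : 4 ≤ m) : uvec m ≠ 0 := by
  intro h
  have h1 : uvec m ⟨m-2, by omega⟩ = 0 := by rw [h]; rfl
  unfold uvec at h1
  simp only [Nat.sub_self] at h1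
  rw [vv_zero] at h1
  norm_num at h1

lemma det_zero_of_SS (m : ℕ) (hm : 4 ≤ m) (hS : SS m = 0) : (paperB3 m).det = 0 := by
  rw [← Matrix.exists_mulVec_eq_zero_iff]
  refine ⟨uvec m, uvec_ne m hm, ?_⟩
  rw [mulVec_uvec m hm]
  funext i
  by_cases h0 : (i:ℕ) = 0
  · simp [h0, hS]
  · simp [h0]

lemma SS_zero_of_det (m : ℕ) (hm : 4 ≤ m) (hd : (paperB3 m).det = 0) : SS m = 0 := by
  obtain ⟨z, hz0, hz⟩ := Matrix.exists_mulVec_eq_zero_iff.mpr hd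
  have hm2 : m-2 < m-1 := by omega
  have main : ∀ r, r ≤ m-2 → z ⟨m-2-r, by omega⟩ = z ⟨m-2, hm2⟩ * vv m r := by
    intro r
    induction r using Nat.twoStepInduction with
    | zero =>
      intro _
      rw [vv_zero, mul_one]
      exact fin_congr z _ _ (by omega)
    | one =>
      intro _
      have hrow := row_last' m hm z hm2
      have hzi : (paperB3 m).mulVec z ⟨m-2, hm2⟩ = 0 := by
        rw [hz]; exact Pi.zero_apply _
      rw [hzi] at hrow
      rw [vv_one]
      have hcst : ((m-2 : ℕ):ℝ) = (m:ℝ)-2 := by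
        have h4 : (m-2) + 2 = m := by omega
        have h5 := congrArg (Nat.cast : ℕ → ℝ) h4
        push_cast at h5
        linarith
      rw [hcst] at hrow
      have he : z ⟨m-2-1, by omega⟩ = z ⟨(m-2)-1, by omega⟩ := rfl
      rw [he]
      nlinarith [hrow]
    | more nn ih1 ih2 =>
      intro hr
      have hilt : m-3-nn < m-1 := by omega
      have hrow := row_mid' m hm z (m-3-nn) hilt (by omega) (by omega)
      have hzi : (paperB3 m).mulVec z ⟨m-3-nn, hilt⟩ = 0 := by
        rw [hz]; exact Pi.zero_apply _
      rw [hzi] at hrow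
      have e1 : z ⟨(m-3-nn)-1, by omega⟩ = z ⟨m-2-(nn+2), by omega⟩ := fin_congr z _ _ (by omega)
      have e2 : z ⟨m-3-nn, hilt⟩ = z ⟨m-2-(nn+1), by omega⟩ := fin_congr z _ _ (by omega)
      have e3 : z ⟨(m-3-nn)+1, by omega⟩ = z ⟨m-2-nn, by omega⟩ := fin_congr z _ _ (by omega)
      rw [e1, e2, e3, ih1 (by omega), ih2 (by omega)] at hrow
      have hrec := vv_rec m nn
      have hcast : ((m-3-nn : ℕ):ℝ) = (m:ℝ)-3-(nn:ℝ) := by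
        have h4 : nn + (m-3-nn) + 3 = m := by omega
        have h5 := congrArg (Nat.cast : ℕ → ℝ) h4
        push_cast at h5
        linarith
      rw [hcast] at hrow
      have hcoef : ((nn:ℝ)+2) ≠ 0 := by positivity
      apply mul_left_cancel₀ hcoef
      linear_combination -hrow - (z ⟨m-2, hm2⟩) * hrec
  have hz_eq : z = (z ⟨m-2, hm2⟩) • uvec m := by
    funext j
    have hj : (j:ℕ) ≤ m-2 := by have := j.isLt; omega
    have hmain := main (m-2-(j:ℕ)) (by omega)
    have e : z ⟨m-2-(m-2-(j:ℕ)), by omega⟩ = z j := by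
      have : z j = z ⟨(j:ℕ), j.isLt⟩ := rfl
      rw [this]
      exact fin_congr z _ _ (by omega)
    rw [e] at hmain
    rw [hmain]
    unfold uvec
    simp
  have hcne : z ⟨m-2, hm2⟩ ≠ 0 := by
    intro h
    apply hz0
    rw [hz_eq, h, zero_smul]
  have h0 : (paperB3 m).mulVec z ⟨0, by omega⟩ = 0 := by
    rw [hz]; exact Pi.zero_apply _
  rw [hz_eq, Matrix.mulVec_smul, mulVec_uvec m hm] at h0
  simp only [Pi.smul_apply, smul_eq_mul] at h0
  have h0' : z ⟨m-2, hm2⟩ * SS m = 0 := by simpa using h0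
  exact (mul_eq_zero.mp h0').resolve_left hcne

end PaperAux

/-- `det B_m(3) ≠ 0` if and only if `Δ(m)⁻¹ ≠ -(4/3)(m-3)`, i.e.
`(-4/3)·(m-3)·Δ(m) ≠ 1`. -/
theorem det_paperB3_ne_zero_iff (m : ℕ) (hm : 4 ≤ m) :
    (paperB3 m).det ≠ 0 ↔ (-(4 / 3)) * ((m : ℝ) - 3) * paperDelta m ≠ 1 := by
  rw [← PaperAux.SS_ne_iff m hm]
  constructor
  · intro hd hS
    exact hd (PaperAux.det_zero_of_SS m hm hS)
  · intro hS hd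
    exact hS (PaperAux.SS_zero_of_det m hm hd)
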